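/- If unit vectors z⁽¹⁾,…,z⁽ᵐ⁾ maximize f(z) = Re⟨𝒜, ⊗_{i=1}^m z⁽ⁱ⁾⟩ over the product of unit spheres and λ denotes the maximum value, then for each k = 1,…,m, ⟨𝒜, ⊗_{i≠k} z⁽ⁱ⁾⟩ = λ (z⁽ᵏ⁾)*; that is, λ is a U-eigenvalue of 𝒜 with U-eigenvector tuple (z⁽¹⁾,…,z⁽ᵐ⁾). -/

import Mathlib

open Finset Complex

/-- Full Hermitian contraction of two complex tensors: `⟨A,B⟩ = Σ conj(A) * B`. -/
noncomputable def tinner {m : ℕ} {n : Fin m → ℕ} (A B : (∀ i : Fin m, Fin (n i)) → ℂ) : ℂ :=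
  ∑ idx : ∀ i : Fin m, Fin (n i), (starRingEnd ℂ) (A idx) * B idx

/-- The rank-one tensor `⊗ᵢ z⁽ⁱ⁾`. -/
noncomputable def otimes {m : ℕ} {n : Fin m → ℕ} (z : ∀ i : Fin m, Fin (n i) → ℂ) :
    (∀ i : Fin m, Fin (n i)) → ℂ :=
  fun idx => ∏ i, z i (idx i)

/-- `z` is a unit vector in `ℂ^k`. -/
def IsUnitVec {k : ℕ} (z : Fin k → ℂ) : Prop := ∑ j, Complex.normSq (z j) = 1

/-- The vector `⟨A, ⊗_{i≠k} z⁽ⁱ⁾⟩ ∈ ℂ^{n_k}`: contraction of `A` against all but the k-th vector. -/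
noncomputable def contraK {m : ℕ} {n : Fin m → ℕ} (A : (∀ i : Fin m, Fin (n i)) → ℂ)
    (z : ∀ i : Fin m, Fin (n i) → ℂ) (k : Fin m) (j : Fin (n k)) : ℂ :=
  ∑ idx : ∀ i : Fin m, Fin (n i),
    if idx k = j then (starRingEnd ℂ) (A idx) * ∏ i ∈ Finset.univ.erase k, z i (idx i) else 0

/-- `(lam, z)` is a U-eigenpair of `A`: all `z⁽ⁱ⁾` are unit vectors and
`⟨A, ⊗_{i≠k} z⁽ⁱ⁾⟩ = lam (z⁽ᵏ⁾)*` for every `k`. -/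
def IsUEigenpair {m : ℕ} {n : Fin m → ℕ} (A : (∀ i : Fin m, Fin (n i)) → ℂ) (lam : ℝ)
    (z : ∀ i : Fin m, Fin (n i) → ℂ) : Prop :=
  (∀ i, IsUnitVec (z i)) ∧ ∀ k : Fin m, ∀ j : Fin (n k),
    contraK A z k j = (lam : ℂ) * (starRingEnd ℂ) (z k j)

/-- `lam` is a U-eigenvalue of `A`. -/
def IsUEigenvalue {m : ℕ} {n : Fin m → ℕ} (A : (∀ i : Fin m, Fin (n i)) → ℂ) (lam : ℝ) : Prop :=
  ∃ z, IsUEigenpair A lam z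

lemma key_inner {E : Type*} [NormedAddCommGroup E] [InnerProductSpace ℂ E]
    (x u : E) (lam : ℝ) (hu : ‖u‖ = 1) (heq : (inner ℂ x u : ℂ).re = lam)
    (hle : ∀ v : E, ‖v‖ = 1 → (inner ℂ x v : ℂ).re ≤ lam) : x = (lam : ℂ) • u := by
  have h1 : lam ≤ ‖x‖ := by
    calc lam = (inner ℂ x u : ℂ).re := heq.symm
      _ ≤ ‖(inner ℂ x u : ℂ)‖ := Complex.re_le_norm _
      _ ≤ ‖x‖ * ‖u‖ := norm_inner_le_norm x u
      _ = ‖x‖ := by rw [hu, mul_one]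
  by_cases hx : x = 0
  · have hl0 : lam = 0 := by
      have := heq
      simp [hx] at this
      linarith
    simp [hx, hl0]
  · have hxpos : 0 < ‖x‖ := norm_pos_iff.mpr hx
    have h2 : ‖x‖ ≤ lam := by
      have hv : ‖((‖x‖⁻¹ : ℝ) : ℂ) • x‖ = 1 := by
        rw [norm_smul]
        simp [_root_.abs_of_nonneg (inv_nonneg.mpr (norm_nonneg x))]
        field_simp
      have h := hle _ hv
      rw [inner_smul_right] at h
      have hself : (inner ℂ x x : ℂ) = ((‖x‖ : ℂ) ^ 2) := inner_self_eq_norm_sq_to_K x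
      rw [hself] at h
      have hre : ((((‖x‖⁻¹ : ℝ) : ℂ)) * ((‖x‖ : ℂ) ^ 2)).re = ‖x‖ := by
        rw [← Complex.ofReal_pow, ← Complex.ofReal_mul]
        rw [Complex.ofReal_re]
        field_simp
      rw [hre] at h
      exact h
    have hnx : ‖x‖ = lam := le_antisymm h2 h1
    have habs : ‖(inner ℂ x u : ℂ)‖ ≤ lam := by
      calc ‖(inner ℂ x u : ℂ)‖ ≤ ‖x‖ * ‖u‖ := norm_inner_le_norm x u
        _ = lam := by rw [hu, hnx, mul_one]
    have him : (inner ℂ x u : ℂ).im = 0 := by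
      have h3 : Complex.normSq (inner ℂ x u : ℂ) ≤ lam ^ 2 := by
        have := Complex.sq_norm (inner ℂ x u : ℂ)
        nlinarith [norm_nonneg (inner ℂ x u : ℂ), habs]
      have h4 : (inner ℂ x u : ℂ).re ^ 2 + (inner ℂ x u : ℂ).im ^ 2 ≤ lam ^ 2 := by
        rw [Complex.normSq_apply] at h3
        nlinarith
      nlinarith [heq]
    have hinner : (inner ℂ x u : ℂ) = (‖x‖ : ℂ) * (‖u‖ : ℂ) := by
      apply Complex.ext
      · simp [heq, hnx, hu]
      · simp [him]
    have := inner_eq_norm_mul_iff.mp hinner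
    rw [hu, hnx] at this
    simpa using this


lemma sum_contraK_mul {m : ℕ} {n : Fin m → ℕ} (A : (∀ i : Fin m, Fin (n i)) → ℂ)
    (z : ∀ i : Fin m, Fin (n i) → ℂ) (k : Fin m) :
    ∑ j, contraK A z k j * z k j = tinner A (otimes z) := by
  unfold contraK tinner otimes
  simp only [Finset.sum_mul, ite_mul, zero_mul]
  rw [Finset.sum_comm]
  refine Finset.sum_congr rfl fun idx _ => ?_
  rw [Finset.sum_ite_eq]
  simp only [Finset.mem_univ, if_true]
  rw [← Finset.mul_prod_erase Finset.univ (fun i => z i (idx i)) (Finset.mem_univ k)]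
  ring

lemma contraK_update {m : ℕ} {n : Fin m → ℕ} (A : (∀ i : Fin m, Fin (n i)) → ℂ)
    (zh : ∀ i : Fin m, Fin (n i) → ℂ) (k : Fin m) (v : Fin (n k) → ℂ) (j : Fin (n k)) :
    contraK A (Function.update zh k v) k j = contraK A zh k j := by
  unfold contraK
  refine Finset.sum_congr rfl fun idx _ => ?_
  by_cases h : idx k = j <;> simp only [h, if_true, if_false, reduceIte]
  congr 1
  refine Finset.prod_congr rfl fun i hi => ?_
  rw [Function.update_of_ne (Finset.ne_of_mem_erase hi)]

lemma unit_of_norm {N : ℕ} (v : Fin N → ℂ)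
    (h : ‖(WithLp.equiv 2 (Fin N → ℂ)).symm v‖ = 1) : IsUnitVec v := by
  rw [EuclideanSpace.norm_eq] at h
  have h2 := Real.sqrt_eq_one.mp h
  unfold IsUnitVec
  rw [← h2]
  refine Finset.sum_congr rfl fun i _ => ?_
  simp [Complex.sq_norm]

lemma norm_of_unit {N : ℕ} (v : Fin N → ℂ) (h : IsUnitVec v) :
    ‖(WithLp.equiv 2 (Fin N → ℂ)).symm v‖ = 1 := by
  rw [EuclideanSpace.norm_eq]
  rw [Real.sqrt_eq_one]
  unfold IsUnitVec at h
  rw [← h]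
  refine Finset.sum_congr rfl fun i _ => ?_
  simp [Complex.sq_norm]

/-- If unit vectors `z⁽¹⁾,…,z⁽ᵐ⁾` maximize `Re⟨A, ⊗z⁽ⁱ⁾⟩` over the product of unit spheres
with maximal value `lam`, then `(lam, z)` is a U-eigenpair of `A`. -/
theorem maximizer_isUEigenpair {m : ℕ} {n : Fin m → ℕ} (A : (∀ i : Fin m, Fin (n i)) → ℂ)
    (zh : ∀ i : Fin m, Fin (n i) → ℂ) (hzh : ∀ i, IsUnitVec (zh i)) (lam : ℝ)
    (hval : lam = (tinner A (otimes zh)).re)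
    (hmax : ∀ z, (∀ i, IsUnitVec (z i)) → (tinner A (otimes z)).re ≤ lam) :
    IsUEigenpair A lam zh := by
  unfold IsUEigenpair
  refine ⟨hzh, fun k j => ?_⟩
  set w : Fin (n k) → ℂ := fun j => contraK A zh k j with hw
  set x : EuclideanSpace ℂ (Fin (n k)) :=
    (WithLp.equiv 2 (Fin (n k) → ℂ)).symm (fun j => (starRingEnd ℂ) (w j)) with hxdef
  set u : EuclideanSpace ℂ (Fin (n k)) := (WithLp.equiv 2 (Fin (n k) → ℂ)).symm (zh k) with hudef
  have hxv : ∀ v : Fin (n k) → ℂ,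
      (inner ℂ x ((WithLp.equiv 2 (Fin (n k) → ℂ)).symm v) : ℂ) = ∑ j, w j * v j := by
    intro v
    rw [PiLp.inner_apply]
    refine Finset.sum_congr rfl fun i _ => ?_
    simp [RCLike.inner_apply, hxdef, mul_comm]
  have hu : ‖u‖ = 1 := norm_of_unit _ (hzh k)
  have heq : (inner ℂ x u : ℂ).re = lam := by
    rw [hudef, hxv, sum_contraK_mul, ← hval]
  have hle : ∀ v : EuclideanSpace ℂ (Fin (n k)), ‖v‖ = 1 → (inner ℂ x v : ℂ).re ≤ lam := by
    intro v hv
    set vp : Fin (n k) → ℂ := (WithLp.equiv 2 (Fin (n k) → ℂ)) v with hvp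
    have hvv : (WithLp.equiv 2 (Fin (n k) → ℂ)).symm vp = v := by simp [hvp]
    have hunit : IsUnitVec vp := unit_of_norm vp (by rw [hvv]; exact hv)
    set zp := Function.update zh k vp with hzp
    have hzpu : ∀ i, IsUnitVec (zp i) := by
      intro i
      by_cases h : i = k
      · subst h; simpa [hzp] using hunit
      · rw [hzp, Function.update_of_ne h]; exact hzh i
    have key : (inner ℂ x v : ℂ) = tinner A (otimes zp) := by
      rw [← hvv, hxv, ← sum_contraK_mul A zp k]
      refine Finset.sum_congr rfl fun i _ => ?_
      rw [contraK_update, hzp, Function.update_self]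
    rw [key]
    exact hmax zp hzpu
  have hfin := key_inner x u lam hu heq hle
  have happ : (WithLp.equiv 2 (Fin (n k) → ℂ)) x j
      = (WithLp.equiv 2 (Fin (n k) → ℂ)) ((lam : ℂ) • u) j := by rw [hfin]
  simp only [hxdef, hudef, WithLp.equiv_symm_apply, WithLp.equiv_apply, PiLp.toLp_apply, WithLp.ofLp_smul, Pi.smul_apply,
    PiLp.smul_apply, smul_eq_mul] at happ
  have : w j = (starRingEnd ℂ) ((lam : ℂ) * zh k j) := by
    rw [← happ]; simp
  rw [hw] at this  -- w j = contraK
  simpa [map_mul, Complex.conj_ofReal] using this
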